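/- Let R > 0 and let E_h, E ∈ 𝒰_R ⊆ ℝⁿ with E_h → E in L¹. Then the sequence {E_h} is equibounded: there exists M > 0 such that E_h ⊆ B(0, M) for every h. -/

import Mathlib

open Set Metric MeasureTheory Filter Topology ENNReal NNReal

noncomputable section

abbrev En (n : ℕ) := EuclideanSpace ℝ (Fin n)

def sphereCond (n : ℕ) (R : ℝ) (E : Set (En n)) : Prop :=
  ∀ p ∈ frontier E, ∃ p' p'' : En n, dist p p' = R ∧ dist p p'' = R ∧
    ball p' R ⊆ E ∧ ball p'' R ∩ E = ∅

def UR (n : ℕ) (R : ℝ) : Set (Set (En n)) :=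
  {E | IsClosed E ∧ Bornology.IsBounded E ∧ sphereCond n R E}

def KConv {X : Type*} [MetricSpace X] (F : ℕ → Set X) (F₀ : Set X) : Prop :=
  (∀ (p : X) (φ : ℕ → ℕ) (x : ℕ → X), StrictMono φ → (∀ k, x k ∈ F (φ k)) →
    Tendsto x atTop (𝓝 p) → p ∈ F₀) ∧
  (∀ p ∈ F₀, ∃ x : ℕ → X, (∀ h, x h ∈ F h) ∧ Tendsto x atTop (𝓝 p))

def L1Conv {n : ℕ} (F : ℕ → Set (En n)) (E : Set (En n)) : Prop :=
  Tendsto (fun h => ∫ x, |(F h).indicator (fun _ => (1:ℝ)) x - E.indicator (fun _ => (1:ℝ)) x|)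
    atTop (𝓝 0)
theorem L1_implies_equibounded (n : ℕ) (hn : 2 ≤ n) (R : ℝ) (hR : 0 < R)
    (Eh : ℕ → Set (En n)) (hEh : ∀ h, Eh h ∈ UR n R)
    (E : Set (En n)) (hE : E ∈ UR n R) (hL1 : L1Conv Eh E) :
    ∃ M > 0, ∀ h, Eh h ⊆ ball 0 M := by
  classical
  obtain ⟨M0, hM0pos, hEM0⟩ := hE.2.1.subset_ball_lt 0 0
  set c : ℝ := (volume (ball (0 : En n) R)).toReal with hc
  have hcpos : 0 < c :=
    ENNReal.toReal_pos (measure_ball_pos volume 0 hR).ne' measure_ball_lt_top.ne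
  -- integrability of indicators of sets in UR
  have hint : ∀ F : Set (En n), F ∈ UR n R →
      Integrable (F.indicator (fun _ => (1:ℝ))) := by
    intro F hF
    rw [integrable_indicator_iff hF.1.measurableSet]
    exact integrableOn_const
      (isCompact_of_isClosed_isBounded hF.1 hF.2.1).measure_lt_top.ne
  have hintball : ∀ z : En n,
      Integrable ((ball z R).indicator (fun _ => (1:ℝ))) := by
    intro z
    rw [integrable_indicator_iff measurableSet_ball]
    exact integrableOn_const measure_ball_lt_top.ne
  -- key estimate: if Eh h has a far point, the L¹ distance is at least c
  have key : ∀ h, ∀ x ∈ Eh h, M0 + 2*R < ‖x‖ →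
      c ≤ ∫ y, |(Eh h).indicator (fun _ => (1:ℝ)) y - E.indicator (fun _ => (1:ℝ)) y| := by
    intro h x hx hxnorm
    obtain ⟨hc1, hb1, hs1⟩ := hEh h
    have hxpos : 0 < ‖x‖ := lt_of_le_of_lt (by positivity) hxnorm
    -- the farthest point of Eh h on the ray through x
    set S : Set ℝ := {t : ℝ | 1 ≤ t ∧ t • x ∈ Eh h} with hSdef
    have hS1 : (1:ℝ) ∈ S := ⟨le_refl 1, by simpa using hx⟩
    obtain ⟨r, hrlt, hr⟩ := hb1.subset_ball_lt 0 0
    have hSbdd : BddAbove S := by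
      refine ⟨r / ‖x‖, ?_⟩
      rintro t ⟨ht1, htx⟩
      have hmem := hr htx
      rw [mem_ball, dist_zero_right, norm_smul, Real.norm_eq_abs,
        abs_of_nonneg (le_trans zero_le_one ht1)] at hmem
      exact (le_div_iff₀ hxpos).2 hmem.le
    have hScl : IsClosed S := by
      have : S = Ici 1 ∩ (fun t : ℝ => t • x) ⁻¹' (Eh h) := rfl
      rw [this]
      exact isClosed_Ici.inter (hc1.preimage (continuous_id.smul continuous_const))
    set T : ℝ := sSup S with hTdef
    have hTS : T ∈ S := hScl.csSup_mem ⟨1, hS1⟩ hSbdd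
    have hT1 : 1 ≤ T := hTS.1
    set p : En n := T • x with hpdef
    have hpE : p ∈ Eh h := hTS.2
    have hpnorm : ‖x‖ ≤ ‖p‖ := by
      rw [hpdef, norm_smul, Real.norm_eq_abs, abs_of_nonneg (le_trans zero_le_one hT1)]
      nlinarith
    have hpfront : p ∈ frontier (Eh h) := by
      rw [hc1.frontier_eq]
      refine ⟨hpE, fun hpint => ?_⟩
      rw [mem_interior_iff_mem_nhds, Metric.mem_nhds_iff] at hpint
      obtain ⟨ε, hε, hball⟩ := hpint
      set δ : ℝ := ε / (2 * ‖x‖) with hδdef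
      have hδ : 0 < δ := by positivity
      have hq : (T + δ) • x ∈ ball p ε := by
        rw [mem_ball, dist_eq_norm, hpdef, ← sub_smul, add_sub_cancel_left, norm_smul,
          Real.norm_eq_abs, abs_of_nonneg hδ.le, hδdef]
        have heq : ε / (2 * ‖x‖) * ‖x‖ = ε / 2 := by
          field_simp
        rw [heq]
        linarith
      have hTδ : T + δ ∈ S := ⟨by linarith, hball hq⟩
      have := le_csSup hSbdd hTδ
      linarith
    obtain ⟨p', p'', hdp', _, hballin, _⟩ := hs1 p hpfront
    have hp'norm : ‖p‖ - R ≤ ‖p'‖ := by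
      have := dist_triangle p p' 0
      rw [dist_zero_right, dist_zero_right] at this
      linarith [hdp' ▸ this]
    have hdisj : ∀ y ∈ ball p' R, y ∉ E := by
      intro y hy hyE
      have h1 : ‖y‖ < M0 := by
        have := hEM0 hyE; rwa [mem_ball, dist_zero_right] at this
      rw [mem_ball] at hy
      have t1 : ‖p'‖ ≤ dist p' y + ‖y‖ := by
        have := dist_triangle p' y 0
        rwa [dist_zero_right, dist_zero_right] at this
      rw [dist_comm] at hy
      linarith
    have hsub : ∀ y, (ball p' R).indicator (fun _ => (1:ℝ)) y ≤
        |(Eh h).indicator (fun _ => (1:ℝ)) y - E.indicator (fun _ => (1:ℝ)) y| := by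
      intro y
      by_cases hy : y ∈ ball p' R
      · rw [indicator_of_mem hy, indicator_of_mem (hballin hy),
          indicator_of_notMem (hdisj y hy)]
        norm_num
      · rw [indicator_of_notMem hy]
        positivity
    have hintf : Integrable (fun y => |(Eh h).indicator (fun _ => (1:ℝ)) y -
        E.indicator (fun _ => (1:ℝ)) y|) := ((hint _ (hEh h)).sub (hint _ hE)).abs
    have hvol : volume (ball p' R) = volume (ball (0 : En n) R) := by
      rw [Measure.addHaar_ball_center, Measure.addHaar_ball_center]
    calc c = ∫ y, (ball p' R).indicator (fun _ => (1:ℝ)) y := by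
            rw [integral_indicator_const (1:ℝ) measurableSet_ball, smul_eq_mul, mul_one, Measure.real, hvol]
      _ ≤ _ := integral_mono (hintball p') hintf hsub
  -- eventually the L¹ distance is below c
  have hL1' : Tendsto (fun h => ∫ y, |(Eh h).indicator (fun _ => (1:ℝ)) y -
      E.indicator (fun _ => (1:ℝ)) y|) atTop (𝓝 0) := hL1
  obtain ⟨N, hN⟩ := eventually_atTop.1 (hL1'.eventually (gt_mem_nhds hcpos))
  -- bound for the finitely many initial sets
  have hbU : Bornology.IsBounded (⋃ h ∈ Iio N, Eh h) :=
    (Bornology.isBounded_biUnion (Set.finite_Iio N)).2 (fun i _ => (hEh i).2.1)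
  obtain ⟨r2, hr2pos, hr2⟩ := hbU.subset_ball_lt 0 0
  refine ⟨max (M0 + 2*R + 1) r2, lt_max_of_lt_right hr2pos, fun h => ?_⟩
  rcases le_or_gt N h with hh | hh
  · intro x hx
    rw [mem_ball, dist_zero_right]
    have hle : ‖x‖ ≤ M0 + 2*R := by
      by_contra hgt
      push_neg at hgt
      exact absurd (key h x hx hgt) (not_le.2 (hN h hh))
    calc ‖x‖ ≤ M0 + 2*R := hle
      _ < M0 + 2*R + 1 := by linarith
      _ ≤ max (M0 + 2*R + 1) r2 := le_max_left _ _
  · intro x hx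
    have : x ∈ ⋃ h ∈ Iio N, Eh h := mem_biUnion hh hx
    exact ball_subset_ball (le_max_right _ _) (hr2 this)
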